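/- Under the hypotheses of Theorem 2 except the iteration-count condition, i.e.: E a real normed vector space, (δv_k) a sequence in E with partial sums converging to v ∈ E, 0 < ρ < 1, c > 0, TOL > 0, ‖δv_k‖ ≤ c·ρ^k for all k, r ∈ ℕ, and (δṽ_k)_{k=0,…,r} in E with ‖δṽ_k − δv_k‖ ≤ (1−ρ)·TOL/(r+1) for all k = 0,…,r, the total error after r+1 inexact sweeps satisfies ‖∑_{k=0}^{r} δṽ_k − v‖ ≤ (1−ρ)·TOL + c·ρ^{r+1}/(1−ρ). -/

import Mathlib

/-- Combined intermediate estimate in the proof of Theorem 2 of the paper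
(triangle inequality): the total error of `r+1` inexact sweeps is bounded by the
accumulated perturbation `(1−ρ)·TOL` plus the geometric tail `c·ρ^{r+1}/(1−ρ)`. -/
theorem inexact_sdc_intermediate_bound
    {E : Type*} [NormedAddCommGroup E] [NormedSpace ℝ E]
    (δv : ℕ → E) (v : E)
    (hconv : Filter.Tendsto (fun r : ℕ => ∑ k ∈ Finset.range (r + 1), δv k)
      Filter.atTop (nhds v))
    (ρ c TOL : ℝ) (hρ0 : 0 < ρ) (hρ1 : ρ < 1) (hc : 0 < c) (hTOL : 0 < TOL)
    (hlin : ∀ k : ℕ, ‖δv k‖ ≤ c * ρ ^ k)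
    (r : ℕ) (δv' : ℕ → E)
    (happrox : ∀ k ≤ r, ‖δv' k - δv k‖ ≤ (1 - ρ) * TOL / (r + 1)) :
    ‖(∑ k ∈ Finset.range (r + 1), δv' k) - v‖ ≤
      (1 - ρ) * TOL + c * ρ ^ (r + 1) / (1 - ρ) := by
  have hρnn : 0 ≤ ρ := hρ0.le
  have h1ρ : 0 < 1 - ρ := by linarith
  have key : (∑ k ∈ Finset.range (r + 1), δv' k) - v =
      (∑ k ∈ Finset.range (r + 1), (δv' k - δv k)) -
        (v - ∑ k ∈ Finset.range (r + 1), δv k) := by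
    rw [Finset.sum_sub_distrib]; abel
  rw [key]
  refine le_trans (norm_sub_le _ _) (add_le_add ?_ ?_)
  · calc ‖∑ k ∈ Finset.range (r + 1), (δv' k - δv k)‖
        ≤ ∑ k ∈ Finset.range (r + 1), ‖δv' k - δv k‖ := norm_sum_le _ _
      _ ≤ ∑ k ∈ Finset.range (r + 1), (1 - ρ) * TOL / (r + 1) := by
          apply Finset.sum_le_sum
          intro k hk
          exact happrox k (Nat.lt_succ_iff.mp (Finset.mem_range.mp hk))
      _ = (1 - ρ) * TOL := by
          rw [Finset.sum_const, Finset.card_range, nsmul_eq_mul]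
          have : (r : ℝ) + 1 ≠ 0 := by positivity
          field_simp
          exact Nat.cast_succ r
  · -- tail bound via limit of partial sums
    have hlim : Filter.Tendsto
        (fun n : ℕ => (∑ k ∈ Finset.range (n + 1), δv k) -
          ∑ k ∈ Finset.range (r + 1), δv k) Filter.atTop
        (nhds (v - ∑ k ∈ Finset.range (r + 1), δv k)) :=
      hconv.sub_const _
    have hnormlim := hlim.norm
    refine le_of_tendsto hnormlim ?_
    filter_upwards [Filter.eventually_ge_atTop r] with n hn
    have hsub : (∑ k ∈ Finset.range (n + 1), δv k) -
        ∑ k ∈ Finset.range (r + 1), δv k = ∑ k ∈ Finset.Ico (r + 1) (n + 1), δv k := by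
      rw [Finset.sum_Ico_eq_sub _ (by omega)]
    rw [hsub]
    calc ‖∑ k ∈ Finset.Ico (r + 1) (n + 1), δv k‖
        ≤ ∑ k ∈ Finset.Ico (r + 1) (n + 1), ‖δv k‖ := norm_sum_le _ _
      _ ≤ ∑ k ∈ Finset.Ico (r + 1) (n + 1), c * ρ ^ k :=
          Finset.sum_le_sum fun k _ => hlin k
      _ = c * ρ ^ (r + 1) * ∑ i ∈ Finset.range (n + 1 - (r + 1)), ρ ^ i := by
          rw [Finset.sum_Ico_eq_sum_range, Finset.mul_sum]
          exact Finset.sum_congr rfl fun i _ => by rw [pow_add]; ring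
      _ ≤ c * ρ ^ (r + 1) * (1 / (1 - ρ)) := by
          apply mul_le_mul_of_nonneg_left _ (by positivity)
          rw [geom_sum_eq hρ1.ne]
          have heq : (ρ ^ (n + 1 - (r + 1)) - 1) / (ρ - 1)
              = (1 - ρ ^ (n + 1 - (r + 1))) / (1 - ρ) := by
            rw [← neg_div_neg_eq]; ring_nf
          rw [heq]
          have hx : 0 ≤ ρ ^ (n + 1 - (r + 1)) := by positivity
          gcongr
          linarith
      _ = c * ρ ^ (r + 1) / (1 - ρ) := by ring
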